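/- Assume μ > r and α(1) > μ. Let w = w_{b₀} be the solution of r w = (μ - α((1-x)^+))w' + (σ²/2)w'' on [0,b₀] with w(0)=0, w'(b₀)=1, w''(b₀)=0 and b₀ > 1, and assume w' > 0 on (0,b₀). Then w is convex-concave: there exists c ∈ (0,1) such that w'' > 0 on (0,c) and w'' < 0 on (c, b₀). -/

import Mathlib

open Set

theorem stmt_11 (μ σ r : ℝ) (hσ : 0 < σ) (hr : 0 < r) (hμr : r < μ)
    (α : ℝ → ℝ) (hα : ContDiff ℝ 1 α) (hαconv : ConvexOn ℝ (Ici 0) α)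
    (hαmono : StrictMonoOn α (Ici 0)) (hα0 : α 0 = 0)
    (hα' : ∀ x ≥ (0:ℝ), r ≤ deriv α x) (hαμ : μ < α 1)
    (b : ℝ) (hb : 1 < b) (w : ℝ → ℝ) (hw : ContDiff ℝ 2 w)
    (hode : ∀ x ∈ Icc (0:ℝ) b,
      r * w x = (μ - α (max (1 - x) 0)) * deriv w x + σ ^ 2 / 2 * deriv (deriv w) x)
    (hw0 : w 0 = 0) (hw'b : deriv w b = 1) (hw''b : deriv (deriv w) b = 0)
    (hw' : ∀ x ∈ Ioo (0:ℝ) b, 0 < deriv w x) :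
    ∃ c ∈ Ioo (0:ℝ) 1, (∀ x ∈ Ioo (0:ℝ) c, 0 < deriv (deriv w) x) ∧
      (∀ x ∈ Ioo c b, deriv (deriv w) x < 0) := by
  have hσ2 : (0:ℝ) < σ ^ 2 := by positivity
  have hμ0 : (0:ℝ) < μ := hr.trans hμr
  -- regularity facts
  have hw1 : ContDiff ℝ 1 (deriv w) := by
    rw [show (2 : WithTop ℕ∞) = 1 + 1 from rfl, contDiff_succ_iff_deriv] at hw
    exact hw.2.2
  have hwd : Differentiable ℝ w := by
    rw [show (2 : WithTop ℕ∞) = 1 + 1 from rfl, contDiff_succ_iff_deriv] at hw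
    exact hw.1
  have hw'd : Differentiable ℝ (deriv w) := hw1.differentiable one_ne_zero
  have hw''c : Continuous (deriv (deriv w)) := hw1.continuous_deriv le_rfl
  have hw'c : Continuous (deriv w) := hw'd.continuous
  have hαd : Differentiable ℝ α := hα.differentiable one_ne_zero
  have hα'c : Continuous (deriv α) := hα.continuous_deriv le_rfl
  have hα'mono : MonotoneOn (deriv α) (Ici 0) :=
    ConvexOn.monotoneOn_deriv hαconv (fun z _ => hαd z)
  -- the key functions
  set g : ℝ → ℝ := fun x => 2 / σ ^ 2 * (r * w x - (μ - α (max (1 - x) 0)) * deriv w x)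
    with hg_def
  set g₁ : ℝ → ℝ := fun x => 2 / σ ^ 2 * (r * w x - (μ - α (1 - x)) * deriv w x) with hg1_def
  set g₂ : ℝ → ℝ := fun x => 2 / σ ^ 2 * (r * w x - μ * deriv w x) with hg2_def
  have hg_eq : ∀ x ∈ Icc (0:ℝ) b, deriv (deriv w) x = g x := by
    intro x hx
    have h := hode x hx
    simp only [hg_def]
    field_simp
    linarith
  have hg1g : ∀ x : ℝ, x ≤ 1 → g x = g₁ x := by
    intro x hx
    simp only [hg_def, hg1_def, max_eq_left (by linarith : (0:ℝ) ≤ 1 - x)]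
  have hg2g : ∀ x : ℝ, 1 ≤ x → g x = g₂ x := by
    intro x hx
    simp only [hg_def, hg2_def, max_eq_right (by linarith : 1 - x ≤ (0:ℝ)), hα0, sub_zero]
  have hgc : Continuous g := by
    have h1 : Continuous fun x : ℝ => α (max (1 - x) 0) :=
      hα.continuous.comp (((continuous_const.sub continuous_id).max continuous_const))
    exact continuous_const.mul ((continuous_const.mul hwd.continuous).sub
      (((continuous_const.sub h1)).mul hw'c))
  -- derivative of g₁
  have hg1' : ∀ x : ℝ, HasDerivAt g₁
      (2 / σ ^ 2 * ((r - deriv α (1 - x)) * deriv w x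
        - (μ - α (1 - x)) * deriv (deriv w) x)) x := by
    intro x
    have h1 : HasDerivAt (fun y : ℝ => α (1 - y)) (-deriv α (1 - x)) x := by
      have := ((hαd (1 - x)).hasDerivAt).comp x ((hasDerivAt_id x).const_sub 1)
      exact this.congr_deriv (by ring)
    have h2 : HasDerivAt (fun y => (μ - α (1 - y)) * deriv w y)
        (deriv α (1 - x) * deriv w x + (μ - α (1 - x)) * deriv (deriv w) x) x := by
      have := ((hasDerivAt_const x μ).sub h1).mul ((hw'd x).hasDerivAt)
      exact this.congr_deriv (by simp only [Pi.sub_apply]; ring)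
    have h3 : HasDerivAt (fun y => r * w y) (r * deriv w x) x := ((hwd x).hasDerivAt).const_mul r
    have := (h3.sub h2).const_mul (2 / σ ^ 2)
    exact this.congr_deriv (by ring)
  have hg1d : Differentiable ℝ g₁ := fun x => (hg1' x).differentiableAt
  have hg1c : Continuous g₁ := hg1d.continuous
  -- derivative of g₂
  have hg2' : ∀ x : ℝ, HasDerivAt g₂
      (2 / σ ^ 2 * (r * deriv w x - μ * deriv (deriv w) x)) x := by
    intro x
    have h3 : HasDerivAt (fun y => r * w y) (r * deriv w x) x := ((hwd x).hasDerivAt).const_mul r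
    have h4 : HasDerivAt (fun y => μ * deriv w y) (μ * deriv (deriv w) x) x :=
      ((hw'd x).hasDerivAt).const_mul μ
    have := (h3.sub h4).const_mul (2 / σ ^ 2)
    exact this
  -- Step 1 : g < 0 on [1, b)
  set H : ℝ → ℝ := fun x => Real.exp (2 * μ / σ ^ 2 * x) * g₂ x with hH_def
  have hH' : ∀ x : ℝ, HasDerivAt H
      (Real.exp (2 * μ / σ ^ 2 * x) * (2 * μ / σ ^ 2) * g₂ x
        + Real.exp (2 * μ / σ ^ 2 * x) * (2 / σ ^ 2 * (r * deriv w x - μ * deriv (deriv w) x))) x := by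
    intro x
    have he : HasDerivAt (fun y : ℝ => Real.exp (2 * μ / σ ^ 2 * y))
        (Real.exp (2 * μ / σ ^ 2 * x) * (2 * μ / σ ^ 2)) x := by
      have := ((hasDerivAt_id x).const_mul (2 * μ / σ ^ 2)).exp
      simpa using this
    exact he.mul (hg2' x)
  have hHc : Continuous H :=
    (Real.continuous_exp.comp (continuous_const.mul continuous_id)).mul
      (Differentiable.continuous (fun x => (hg2' x).differentiableAt))
  have hHmono : StrictMonoOn H (Icc 1 b) := by
    apply strictMonoOn_of_deriv_pos (convex_Icc 1 b) hHc.continuousOn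
    intro x hx
    rw [interior_Icc] at hx
    rw [(hH' x).deriv]
    have hxb : x ∈ Icc (0:ℝ) b := ⟨by linarith [hx.1], hx.2.le⟩
    have hgg : deriv (deriv w) x = g₂ x := (hg_eq x hxb).trans (hg2g x hx.1.le)
    rw [hgg]
    have h1 : (0:ℝ) < Real.exp (2 * μ / σ ^ 2 * x) := Real.exp_pos _
    have h2 : 0 < deriv w x := hw' x ⟨by linarith [hx.1], hx.2⟩
    have : Real.exp (2 * μ / σ ^ 2 * x) * (2 * μ / σ ^ 2) * g₂ x
        + Real.exp (2 * μ / σ ^ 2 * x) * (2 / σ ^ 2 * (r * deriv w x - μ * g₂ x))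
        = Real.exp (2 * μ / σ ^ 2 * x) * (2 / σ ^ 2) * r * deriv w x := by
      field_simp
      ring
    rw [this]
    positivity
  have hHb : H b = 0 := by
    have : g₂ b = 0 := by
      rw [← hg2g b hb.le, ← hg_eq b ⟨by linarith, le_rfl⟩, hw''b]
    simp [hH_def, this]
  have hneg : ∀ x ∈ Ico (1:ℝ) b, g x < 0 := by
    intro x hx
    have h := hHmono ⟨hx.1, hx.2.le⟩ ⟨hb.le, le_rfl⟩ hx.2
    rw [hHb] at h
    have hE : (0:ℝ) < Real.exp (2 * μ / σ ^ 2 * x) := Real.exp_pos _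
    have : g₂ x < 0 := by
      by_contra hcon
      push_neg at hcon
      have : 0 ≤ H x := mul_nonneg hE.le hcon
      linarith
    rw [hg2g x hx.1]
    exact this
  -- Step 2 : the integrating factor on [0,1]
  set A : ℝ → ℝ := fun x => ∫ t in (0:ℝ)..x, (μ - α (1 - t)) with hA_def
  have hAc : Continuous fun t : ℝ => μ - α (1 - t) :=
    continuous_const.sub (hα.continuous.comp (continuous_const.sub continuous_id))
  have hA' : ∀ x : ℝ, HasDerivAt A (μ - α (1 - x)) x := fun x =>
    (hAc.integral_hasStrictDerivAt 0 x).hasDerivAt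
  set E : ℝ → ℝ := fun x => Real.exp (2 / σ ^ 2 * A x) with hE_def
  have hE' : ∀ x : ℝ, HasDerivAt E (E x * (2 / σ ^ 2 * (μ - α (1 - x)))) x := by
    intro x
    exact ((hA' x).const_mul (2 / σ ^ 2)).exp
  have hEpos : ∀ x : ℝ, 0 < E x := fun x => Real.exp_pos _
  set G : ℝ → ℝ := fun x => E x * g₁ x with hG_def
  have hG' : ∀ x : ℝ, HasDerivAt G
      (E x * (2 / σ ^ 2 * (μ - α (1 - x))) * g₁ x
        + E x * (2 / σ ^ 2 * ((r - deriv α (1 - x)) * deriv w x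
          - (μ - α (1 - x)) * deriv (deriv w) x))) x := fun x => (hE' x).mul (hg1' x)
  have hGc : Continuous G :=
    (Differentiable.continuous (fun x => (hE' x).differentiableAt)).mul hg1c
  have hderivG : ∀ x ∈ Ioo (0:ℝ) 1, deriv G x
      = E x * (2 / σ ^ 2) * ((r - deriv α (1 - x)) * deriv w x) := by
    intro x hx
    have hxb : x ∈ Icc (0:ℝ) b := ⟨hx.1.le, by linarith [hx.2]⟩
    have hgg : deriv (deriv w) x = g₁ x := (hg_eq x hxb).trans (hg1g x hx.2.le)
    rw [(hG' x).deriv, hgg]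
    ring
  have hGanti : AntitoneOn G (Icc 0 1) := by
    apply antitoneOn_of_deriv_nonpos (convex_Icc 0 1) hGc.continuousOn
    · intro x _
      exact (hG' x).differentiableAt.differentiableWithinAt
    · intro x hx
      rw [interior_Icc] at hx
      rw [hderivG x hx]
      have h1 : 0 < deriv w x := hw' x ⟨hx.1, by linarith [hx.2]⟩
      have h2 : r ≤ deriv α (1 - x) := hα' (1 - x) (by linarith [hx.2])
      have h3 : 0 < E x * (2 / σ ^ 2) := by positivity
      have h4 : (r - deriv α (1 - x)) * deriv w x ≤ 0 :=
        mul_nonpos_of_nonpos_of_nonneg (by linarith) h1.le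
      exact mul_nonpos_of_nonneg_of_nonpos h3.le h4
  -- the set S and c
  set S : Set ℝ := Icc (0:ℝ) 1 ∩ {x | 0 ≤ g x} with hS_def
  have hSclosed : IsClosed S := isClosed_Icc.inter (isClosed_le continuous_const hgc)
  have hScomp : IsCompact S := isCompact_Icc.inter_right (isClosed_le continuous_const hgc)
  have hw'0 : 0 ≤ deriv w 0 := by
    have ht : Filter.Tendsto (deriv w) (nhdsWithin 0 (Ioi 0)) (nhds (deriv w 0)) :=
      (hw'c.tendsto 0).mono_left nhdsWithin_le_nhds
    refine ge_of_tendsto ht ?_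
    filter_upwards [Ioo_mem_nhdsGT_of_mem (⟨le_rfl, by linarith⟩ : (0:ℝ) ∈ Ico 0 b)] with x hx
    exact (hw' x hx).le
  have hg0 : g 0 = 2 / σ ^ 2 * ((α 1 - μ) * deriv w 0) := by
    simp only [hg_def, hw0, sub_zero, mul_zero]
    norm_num
    ring
  have hSne : S.Nonempty := by
    refine ⟨0, ⟨le_rfl, zero_le_one⟩, ?_⟩
    rw [mem_setOf_eq, hg0]
    have : 0 ≤ α 1 - μ := by linarith
    positivity
  set c : ℝ := sSup S with hc_def
  have hcS : c ∈ S := hScomp.sSup_mem hSne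
  have hc0 : 0 ≤ c := hcS.1.1
  have hc1 : c ≤ 1 := hcS.1.2
  have hgc0 : 0 ≤ g c := hcS.2
  have hlt : ∀ x : ℝ, c < x → x ≤ 1 → g x < 0 := by
    intro x h1 h2
    by_contra hcon
    push_neg at hcon
    have hxS : x ∈ S := ⟨⟨le_trans hc0 h1.le, h2⟩, hcon⟩
    have := le_csSup hScomp.bddAbove hxS
    linarith
  have hc1' : c < 1 := by
    rcases lt_or_eq_of_le hc1 with h | h
    · exact h
    · exfalso
      have := hneg 1 ⟨le_rfl, hb⟩
      rw [← h] at this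
      linarith
  have hgceq : g c = 0 := by
    refine le_antisymm ?_ hgc0
    have ht : Filter.Tendsto g (nhdsWithin c (Ioi c)) (nhds (g c)) :=
      (hgc.tendsto c).mono_left nhdsWithin_le_nhds
    refine le_of_tendsto ht ?_
    filter_upwards [Ioo_mem_nhdsGT_of_mem (⟨le_rfl, hc1'⟩ : c ∈ Ico c 1)] with x hx
    exact (hlt x hx.1 hx.2.le).le
  have hcpos : 0 < c := by
    rcases lt_or_eq_of_le hc0 with h | h
    · exact h
    · exfalso
      have hanti : StrictAntiOn (deriv w) (Icc 0 1) := by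
        apply strictAntiOn_of_deriv_neg (convex_Icc 0 1) hw'c.continuousOn
        intro y hy
        rw [interior_Icc] at hy
        rw [hg_eq y ⟨hy.1.le, by linarith [hy.2]⟩]
        exact hlt y (by rw [← h]; exact hy.1) hy.2.le
      have h1 : deriv w 1 < deriv w 0 :=
        hanti ⟨le_rfl, zero_le_one⟩ ⟨zero_le_one, le_rfl⟩ one_pos
      have h2 : 0 < deriv w 1 := hw' 1 ⟨one_pos, hb⟩
      have h3 : 0 < g 0 := by
        rw [hg0]
        have : 0 < α 1 - μ := by linarith
        have : 0 < deriv w 0 := by linarith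
        positivity
      rw [← h] at hgceq
      linarith
  -- positivity on (0, c)
  have hGc0 : G c = 0 := by
    simp only [hG_def]
    rw [← hg1g c hc1, hgceq, mul_zero]
  have hpos : ∀ x ∈ Ioo (0:ℝ) c, 0 < g x := by
    intro x hx
    have hx1 : x < 1 := hx.2.trans hc1'
    have hxIcc : x ∈ Icc (0:ℝ) 1 := ⟨hx.1.le, hx1.le⟩
    have hge : 0 ≤ g x := by
      have h := hGanti hxIcc ⟨hc0, hc1⟩ hx.2.le
      rw [hGc0] at h
      have := hEpos x
      rw [hg1g x hx1.le]
      by_contra hcon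
      push_neg at hcon
      have : G x < 0 := mul_neg_of_pos_of_neg (hEpos x) hcon
      linarith
    rcases lt_or_eq_of_le hge with h | h
    · exact h
    exfalso
    -- g vanishes identically on [x, c]
    have hGx : G x = 0 := by
      simp only [hG_def]
      rw [← hg1g x hx1.le, ← h, mul_zero]
    have hzero : ∀ y ∈ Icc x c, g₁ y = 0 := by
      intro y hy
      have hyIcc : y ∈ Icc (0:ℝ) 1 := ⟨le_trans hx.1.le hy.1, le_trans hy.2 hc1⟩
      have h1 : G y ≤ G x := hGanti hxIcc hyIcc hy.1
      have h2 : G c ≤ G y := hGanti hyIcc ⟨hc0, hc1⟩ hy.2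
      rw [hGx] at h1
      rw [hGc0] at h2
      have hGy : G y = 0 := le_antisymm h1 h2
      simp only [hG_def] at hGy
      rcases mul_eq_zero.mp hGy with h' | h'
      · exact absurd h' (ne_of_gt (hEpos y))
      · exact h'
    -- the derivative of α equals r on the relevant range
    have hα'eq : ∀ y ∈ Ioo x c, deriv α (1 - y) = r := by
      intro y hy
      have hy01 : y ∈ Ioo (0:ℝ) 1 := ⟨hx.1.trans hy.1, hy.2.trans hc1'⟩
      have hGloc : deriv G y = 0 := by
        have hev : G =ᶠ[nhds y] fun _ => (0:ℝ) := by
          filter_upwards [Ioo_mem_nhds hy.1 hy.2] with z hz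
          simp only [hG_def]
          rw [hzero z ⟨hz.1.le, hz.2.le⟩, mul_zero]
        rw [hev.deriv_eq, deriv_const]
      rw [hderivG y hy01] at hGloc
      have h1 : 0 < deriv w y := hw' y ⟨hy01.1, by linarith [hy01.2]⟩
      have h2 : 0 < E y * (2 / σ ^ 2) := by positivity
      have h3 : (r - deriv α (1 - y)) * deriv w y = 0 := by
        rcases mul_eq_zero.mp hGloc with h' | h'
        · exact absurd h' (ne_of_gt h2)
        · exact h'
      rcases mul_eq_zero.mp h3 with h' | h'
      · linarith
      · exact absurd h' (ne_of_gt h1)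
    set x' : ℝ := (x + c) / 2 with hx'_def
    have hxx' : x < x' := by simp only [hx'_def]; linarith [hx.2]
    have hx'c : x' < c := by simp only [hx'_def]; linarith [hx.2]
    have hx'pos : 0 < x' := hx.1.trans hxx'
    have hx'1 : x' < 1 := hx'c.trans hc1'
    have hα'x' : deriv α (1 - x') = r := hα'eq x' ⟨hxx', hx'c⟩
    have hα'all : ∀ t ∈ Ico x' (1:ℝ), deriv α (1 - t) = r := by
      intro t ht
      have h1 : (1:ℝ) - t ∈ Ici (0:ℝ) := mem_Ici.2 (by linarith [ht.2])
      have h2 : (1:ℝ) - x' ∈ Ici (0:ℝ) := mem_Ici.2 (by linarith)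
      have h3 : deriv α (1 - t) ≤ deriv α (1 - x') :=
        hα'mono h1 h2 (by linarith [ht.1])
      have h4 := hα' (1 - t) (by linarith [ht.2])
      rw [hα'x'] at h3
      linarith
    -- Gronwall on [x', 1]
    set K : ℝ := 2 / σ ^ 2 * (μ + α 1) with hK_def
    have hαval : ∀ t ∈ Ico x' (1:ℝ), 0 < α (1 - t) ∧ α (1 - t) < α 1 := by
      intro t ht
      constructor
      · rw [← hα0]
        exact hαmono (mem_Ici.2 le_rfl) (mem_Ici.2 (by linarith [ht.2])) (by linarith [ht.2])
      · exact hαmono (mem_Ici.2 (by linarith [ht.2])) (mem_Ici.2 zero_le_one)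
          (by linarith [hx'pos, ht.1])
    have hgron : ∀ t ∈ Icc x' (1:ℝ), ‖g₁ t‖ ≤ gronwallBound 0 K 0 (t - x') := by
      apply norm_le_gronwallBound_of_norm_deriv_right_le (f' := fun t =>
        2 / σ ^ 2 * ((r - deriv α (1 - t)) * deriv w t - (μ - α (1 - t)) * deriv (deriv w) t))
      · exact hg1c.continuousOn
      · intro t _
        exact (hg1' t).hasDerivWithinAt
      · rw [hzero x' ⟨hxx'.le, hx'c.le⟩]; simp
      · intro t ht
        have htb : t ∈ Icc (0:ℝ) b := ⟨by linarith [ht.1, hx'pos], by linarith [ht.2]⟩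
        have hgg : deriv (deriv w) t = g₁ t := (hg_eq t htb).trans (hg1g t ht.2.le)
        rw [hα'all t ht, hgg, sub_self, zero_mul, zero_sub]
        have hb1 := (hαval t ht).1
        have hb2 := (hαval t ht).2
        have habs : |μ - α (1 - t)| ≤ μ + α 1 := abs_le.2 ⟨by linarith, by linarith⟩
        have : ‖2 / σ ^ 2 * -((μ - α (1 - t)) * g₁ t)‖
            = 2 / σ ^ 2 * (|μ - α (1 - t)| * ‖g₁ t‖) := by
          rw [norm_mul, norm_neg, norm_mul]
          simp [Real.norm_eq_abs, abs_of_pos (show (0:ℝ) < 2 / σ ^ 2 by positivity)]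
        rw [this, hK_def, add_zero]
        rw [mul_assoc]
        apply mul_le_mul_of_nonneg_left _ (by positivity : (0:ℝ) ≤ 2 / σ ^ 2)
        exact mul_le_mul_of_nonneg_right habs (norm_nonneg _)
    have hg11 : g₁ 1 = 0 := by
      have := hgron 1 ⟨hx'1.le, le_rfl⟩
      rw [gronwallBound_ε0_δ0] at this
      simpa using this
    have hg1neg : g 1 < 0 := hneg 1 ⟨le_rfl, hb⟩
    rw [hg1g 1 le_rfl, hg11] at hg1neg
    linarith
  -- conclusion
  refine ⟨c, ⟨hcpos, hc1'⟩, ?_, ?_⟩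
  · intro x hx
    rw [hg_eq x ⟨hx.1.le, by linarith [hx.2, hc1']⟩]
    exact hpos x hx
  · intro x hx
    rw [hg_eq x ⟨by linarith [hx.1], hx.2.le⟩]
    rcases le_or_gt x 1 with h | h
    · exact hlt x hx.1 h
    · exact hneg x ⟨h.le, hx.2⟩
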